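/- arXiv:1507.05235 — 2 statements merged into one kernel-verified Lean document; each statement's English description precedes it below -/
import Mathlib

section
/- Let d ≥ 1, let k = (k_1,…,k_d) be a multi-index, and let f : ℝ^d → ℝ possess a continuous mixed partial derivative ∂^{|k|}f/∂x_1^{k_1}⋯∂x_d^{k_d}. Then (n!/(n−|k|)!) · Δ^k f(x) converges to ∂^{|k|}f(x)/∂x_1^{k_1}⋯∂x_d^{k_d} as n → ∞, uniformly for x in the simplex S^d = {x ∈ ℝ^d : x_1,…,x_d ≥ 0 and x_1+⋯+x_d ≤ 1}, where Δ^k is the composition of the k_i-fold iterated forward differences with step 1/n in each coordinate. -/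
/-- Forward difference of `g : ℝ^d → ℝ` in the `i`-th coordinate with step `z`. -/
def coordFwdDiff {d : ℕ} (i : Fin d) (z : ℝ) (g : (Fin d → ℝ) → ℝ) :
    (Fin d → ℝ) → ℝ :=
  fun x => g (Function.update x i (x i + z)) - g x

/-- The iterated finite difference `Δ^k = Δ_{(x_1)}^{k_1} ∘ ⋯ ∘ Δ_{(x_d)}^{k_d}` with
step `1/n` in each coordinate. -/
noncomputable def multiFwdDiffN {d : ℕ} (n : ℕ) (k : Fin d → ℕ) (g : (Fin d → ℝ) → ℝ) :
    (Fin d → ℝ) → ℝ :=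
  (List.finRange d).foldr (fun i h => (coordFwdDiff i (1 / (n : ℝ)))^[k i] h) g

/-- `IsPartialAlong l f g` says that `g` is the iterated partial derivative of `f` taken
successively in the coordinates listed in `l` (head of the list is the outermost
differentiation), each single differentiation existing everywhere. -/
def IsPartialAlong {d : ℕ} : List (Fin d) → ((Fin d → ℝ) → ℝ) → ((Fin d → ℝ) → ℝ) → Prop
  | [], f, g => g = f
  | i :: l, f, g => ∃ h : (Fin d → ℝ) → ℝ, IsPartialAlong l f h ∧
      ∀ x, HasDerivAt (fun t => h (Function.update x i t)) (g x) (x i)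

/-- The list of coordinates `1^{k_1}, 2^{k_2}, …, d^{k_d}` encoding the multi-index `k`. -/
def multiIndexList {d : ℕ} (k : Fin d → ℕ) : List (Fin d) :=
  (List.finRange d).flatMap fun i => List.replicate (k i) i

/-- The standard simplex `S^d = {x : x_i ≥ 0, x_1+⋯+x_d ≤ 1}`. -/
def stdSimplex' (d : ℕ) : Set (Fin d → ℝ) := {x | (∀ i, 0 ≤ x i) ∧ ∑ i, x i ≤ 1}

namespace MFDaux

variable {d : ℕ}

/-- Iterated forward difference along a list of coordinates (head outermost). -/
def listDiff (z : ℝ) : List (Fin d) → ((Fin d → ℝ) → ℝ) → ((Fin d → ℝ) → ℝ)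
  | [], g => g
  | i :: l, g => coordFwdDiff i z (listDiff z l g)

lemma coordFwdDiff_comm (i j : Fin d) (z : ℝ) (g : (Fin d → ℝ) → ℝ) :
    coordFwdDiff i z (coordFwdDiff j z g) = coordFwdDiff j z (coordFwdDiff i z g) := by
  rcases eq_or_ne i j with rfl | h
  · rfl
  · funext x
    simp only [coordFwdDiff, Function.update_of_ne h, Function.update_of_ne h.symm,
      Function.update_comm h]
    ring

lemma listDiff_coordFwdDiff (z : ℝ) (i : Fin d) (l : List (Fin d)) (g : (Fin d → ℝ) → ℝ) :
    listDiff z l (coordFwdDiff i z g) = coordFwdDiff i z (listDiff z l g) := by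
  induction l with
  | nil => rfl
  | cons j l ih => rw [listDiff, ih, coordFwdDiff_comm]; rfl

lemma listDiff_append (z : ℝ) (l₁ l₂ : List (Fin d)) (g : (Fin d → ℝ) → ℝ) :
    listDiff z (l₁ ++ l₂) g = listDiff z l₁ (listDiff z l₂ g) := by
  induction l₁ with
  | nil => rfl
  | cons i l ih => rw [List.cons_append, listDiff, ih]; rfl

lemma listDiff_replicate (z : ℝ) (m : ℕ) (i : Fin d) (g : (Fin d → ℝ) → ℝ) :
    listDiff z (List.replicate m i) g = (coordFwdDiff i z)^[m] g := by
  induction m with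
  | zero => rfl
  | succ m ih =>
      rw [List.replicate_succ, listDiff, ih, Function.iterate_succ']
      rfl

lemma multiFwdDiffN_eq_listDiff (n : ℕ) (k : Fin d → ℕ) (f : (Fin d → ℝ) → ℝ) :
    multiFwdDiffN n k f = listDiff (1 / (n : ℝ)) (multiIndexList k) f := by
  unfold multiFwdDiffN multiIndexList
  induction (List.finRange d) with
  | nil => rfl
  | cons i L ih =>
      rw [List.foldr_cons, ih, List.flatMap_cons, listDiff_append, listDiff_replicate]

lemma isPartialAlong_shift {l : List (Fin d)} {f h : (Fin d → ℝ) → ℝ}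
    (hl : IsPartialAlong l f h) (i : Fin d) (z : ℝ) :
    IsPartialAlong l (fun x => f (Function.update x i (x i + z)))
      (fun x => h (Function.update x i (x i + z))) := by
  induction l generalizing f h with
  | nil => rw [hl]; rfl
  | cons j l ih =>
      obtain ⟨h', hh', hd'⟩ := hl
      refine ⟨fun x => h' (Function.update x i (x i + z)), ih hh', fun x => ?_⟩
      rcases eq_or_ne j i with rfl | hji
      · -- function: fun t => h' (update (update x j t) j ((update x j t) j + z))
        --          = fun t => h' (update x j (t + z))
        have key := hd' (Function.update x j (x j + z))
        simp only [Function.update_idem, Function.update_self] at key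
        have := key.comp_add_const (x j) z
        simpa [Function.update_idem, Function.update_self] using this
      · have key := hd' (Function.update x i (x i + z))
        have hx : (Function.update x i (x i + z)) j = x j := Function.update_of_ne hji _ _
        rw [hx] at key
        have hfun : ∀ t : ℝ,
            Function.update (Function.update x j t) i ((Function.update x j t) i + z)
              = Function.update (Function.update x i (x i + z)) j t := by
          intro t
          rw [Function.update_of_ne (Ne.symm hji), Function.update_comm hji]
        simpa only [hfun] using key

lemma isPartialAlong_sub {l : List (Fin d)} {f₁ h₁ f₂ h₂ : (Fin d → ℝ) → ℝ}
    (h1 : IsPartialAlong l f₁ h₁) (h2 : IsPartialAlong l f₂ h₂) :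
    IsPartialAlong l (fun x => f₁ x - f₂ x) (fun x => h₁ x - h₂ x) := by
  induction l generalizing f₁ h₁ f₂ h₂ with
  | nil => rw [show h₁ = f₁ from h1, show h₂ = f₂ from h2]; rfl
  | cons j l ih =>
      obtain ⟨g₁, hg₁, hd₁⟩ := h1
      obtain ⟨g₂, hg₂, hd₂⟩ := h2
      exact ⟨fun x => g₁ x - g₂ x, ih hg₁ hg₂, fun x => (hd₁ x).sub (hd₂ x)⟩

lemma isPartialAlong_coordFwdDiff {l : List (Fin d)} {f h : (Fin d → ℝ) → ℝ}
    (hl : IsPartialAlong l f h) (i : Fin d) (z : ℝ) :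
    IsPartialAlong l (coordFwdDiff i z f) (coordFwdDiff i z h) :=
  isPartialAlong_sub (isPartialAlong_shift hl i z) hl

lemma fwdDiff_eq_deriv {h g : (Fin d → ℝ) → ℝ} (i : Fin d) {z : ℝ} (hz : 0 < z)
    (hd' : ∀ x, HasDerivAt (fun t => h (Function.update x i t)) (g x) (x i))
    (x : Fin d → ℝ) :
    ∃ c ∈ Set.Icc (x i) (x i + z),
      coordFwdDiff i z h x = z * g (Function.update x i c) := by
  have key : ∀ t : ℝ, HasDerivAt (fun s => h (Function.update x i s))
      (g (Function.update x i t)) t := by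
    intro t
    have := hd' (Function.update x i t)
    simpa [Function.update_idem] using this
  have hab : x i < x i + z := by linarith
  obtain ⟨c, hc, hceq⟩ := exists_hasDerivAt_eq_slope (fun s => h (Function.update x i s))
    (fun s => g (Function.update x i s)) hab
    (fun s _ => (key s).continuousAt.continuousWithinAt) (fun s _ => key s)
  refine ⟨c, Set.Ioo_subset_Icc_self hc, ?_⟩
  have hz' : z ≠ 0 := ne_of_gt hz
  have : x i + z - x i = z := by ring
  rw [this] at hceq
  have : z * g (Function.update x i c)
      = h (Function.update x i (x i + z)) - h (Function.update x i (x i)) := by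
    rw [hceq]; field_simp
  rw [coordFwdDiff, this, Function.update_eq_self]

lemma listDiff_eq_mul {z : ℝ} (hz : 0 < z) (l : List (Fin d)) :
    ∀ (f g : (Fin d → ℝ) → ℝ), IsPartialAlong l f g →
    ∀ x, ∃ y : Fin d → ℝ, (∀ j, x j ≤ y j ∧ y j ≤ x j + (l.count j : ℝ) * z) ∧
      listDiff z l f x = z ^ l.length * g y := by
  induction l with
  | nil =>
      intro f g hg x
      exact ⟨x, fun j => ⟨le_refl _, by simp⟩, by rw [hg]; simp [listDiff]⟩
  | cons i l ih =>
      intro f g hg x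
      obtain ⟨h, hh, hd'⟩ := hg
      have h1 : IsPartialAlong l (coordFwdDiff i z f) (coordFwdDiff i z h) :=
        isPartialAlong_coordFwdDiff hh i z
      obtain ⟨y, hy, heq⟩ := ih _ _ h1 x
      obtain ⟨c, hc, hceq⟩ := fwdDiff_eq_deriv i hz hd' y
      refine ⟨Function.update y i c, fun j => ?_, ?_⟩
      · rcases eq_or_ne j i with rfl | hji
        · rw [Function.update_self]
          constructor
          · exact le_trans (hy j).1 hc.1
          · have h2 := (hy j).2
            have h3 := hc.2
            have hcount : ((j :: l).count j : ℝ) = (l.count j : ℝ) + 1 := by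
              rw [List.count_cons_self]; push_cast; ring
            rw [hcount]
            nlinarith
        · rw [Function.update_of_ne hji]
          refine ⟨(hy j).1, le_trans (hy j).2 ?_⟩
          have : (l.count j : ℝ) ≤ ((i :: l).count j : ℝ) := by
            exact_mod_cast (List.count_le_count_cons : l.count j ≤ (i :: l).count j)
          nlinarith
      · have : listDiff z (i :: l) f x = listDiff z l (coordFwdDiff i z f) x := by
          rw [listDiff_coordFwdDiff]; rfl
        rw [this, heq, hceq, List.length_cons]
        ring

lemma length_multiIndexList (k : Fin d → ℕ) :
    (multiIndexList k).length = ∑ i, k i := by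
  rw [multiIndexList, List.length_flatMap, Fin.sum_univ_def]
  simp [Function.comp_def]

lemma tendsto_factorial_ratio (m : ℕ) :
    Filter.Tendsto
      (fun n : ℕ => (n.factorial : ℝ) / ((n - m).factorial : ℝ) * (1 / (n : ℝ)) ^ m)
      Filter.atTop (nhds 1) := by
  have h1 : Filter.Tendsto (fun n : ℕ => ∏ i ∈ Finset.range m, (1 - (i : ℝ) / n))
      Filter.atTop (nhds (∏ _i ∈ Finset.range m, (1 : ℝ))) := by
    apply tendsto_finset_prod
    intro i _
    simpa using tendsto_const_nhds.sub (tendsto_const_div_atTop_nhds_zero_nat (i : ℝ))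
  rw [Finset.prod_const_one] at h1
  apply h1.congr'
  filter_upwards [Filter.eventually_ge_atTop (max 1 m)] with n hn
  have hn1 : 1 ≤ n := le_trans (le_max_left _ _) hn
  have hnm : m ≤ n := le_trans (le_max_right _ _) hn
  have hn0 : (n : ℝ) ≠ 0 := Nat.cast_ne_zero.mpr (by omega)
  have hfac : ((n - m).factorial : ℝ) * (n.descFactorial m : ℝ) = (n.factorial : ℝ) := by
    exact_mod_cast congrArg (Nat.cast (R := ℝ)) (Nat.factorial_mul_descFactorial hnm)
  have hdesc : (n.descFactorial m : ℝ) = ∏ i ∈ Finset.range m, ((n : ℝ) - i) := by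
    rw [Nat.descFactorial_eq_prod_range]
    push_cast
    apply Finset.prod_congr rfl
    intro i hi
    rw [Nat.cast_sub (le_trans (le_of_lt (Finset.mem_range.mp hi)) hnm)]
  have hratio : (n.factorial : ℝ) / ((n - m).factorial : ℝ) = (n.descFactorial m : ℝ) := by
    rw [← hfac]
    field_simp
  rw [hratio, hdesc,
    show ((1 : ℝ) / n) ^ m = ∏ _i ∈ Finset.range m, (1 / (n : ℝ)) by
      rw [Finset.prod_const, Finset.card_range],
    ← Finset.prod_mul_distrib]
  apply Finset.prod_congr rfl
  intro i hi
  field_simp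

end MFDaux

/-- If `d ≥ 1`, `k` is a multi-index and `f : ℝ^d → ℝ` possesses a continuous mixed
partial derivative `g = ∂^{|k|}f/∂x_1^{k_1}⋯∂x_d^{k_d}`, then
`(n!/(n-|k|)!) Δ^k f(x) → g(x)` as `n → ∞`, uniformly on the simplex `S^d`. -/
theorem multiFwdDiffN_tendstoUniformlyOn_simplex (d : ℕ) (hd : 1 ≤ d) (k : Fin d → ℕ)
    (f g : (Fin d → ℝ) → ℝ) (hg : IsPartialAlong (multiIndexList k) f g)
    (hgc : Continuous g) :
    TendstoUniformlyOn
      (fun (n : ℕ) x =>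
        (n.factorial : ℝ) / ((n - ∑ i, k i).factorial : ℝ) * multiFwdDiffN n k f x)
      g Filter.atTop (stdSimplex' d) := by
  classical
  set m := ∑ i, k i with hm
  rw [Metric.tendstoUniformlyOn_iff]
  intro ε hε
  set K : Set (Fin d → ℝ) := Set.univ.pi (fun _ => Set.Icc (0 : ℝ) (1 + (m : ℝ))) with hK
  have hKc : IsCompact K := isCompact_univ_pi fun _ => isCompact_Icc
  obtain ⟨M₀, hM₀⟩ := hKc.exists_bound_of_continuousOn hgc.continuousOn
  set M := max M₀ 0 with hMdef
  have hM : ∀ y ∈ K, |g y| ≤ M := fun y hy => le_trans (hM₀ y hy) (le_max_left _ _)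
  have hM0 : (0 : ℝ) ≤ M := le_max_right _ _
  have hgu := hKc.uniformContinuousOn_of_continuous hgc.continuousOn
  rw [Metric.uniformContinuousOn_iff] at hgu
  obtain ⟨δ, hδ, hδ'⟩ := hgu (ε / 2) (by linarith)
  have hc := MFDaux.tendsto_factorial_ratio m
  rw [Metric.tendsto_atTop] at hc
  obtain ⟨N₁, hN₁⟩ := hc (ε / (2 * (M + 1))) (by positivity)
  obtain ⟨N₂, hN₂⟩ := exists_nat_gt ((m : ℝ) / δ)
  filter_upwards [Filter.eventually_ge_atTop (max (max N₁ (max 1 m)) N₂)] with n hn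
  rw [max_le_iff, max_le_iff, max_le_iff] at hn
  obtain ⟨⟨hnN₁, hn1, hnm⟩, hnN₂⟩ := hn
  intro x hx
  have hn0 : (0 : ℝ) < n := by exact_mod_cast Nat.lt_of_lt_of_le Nat.zero_lt_one hn1
  set z : ℝ := 1 / n with hz
  have hzpos : 0 < z := by positivity
  obtain ⟨y, hy, heq⟩ := MFDaux.listDiff_eq_mul hzpos (multiIndexList k) f g hg x
  have hlen : (multiIndexList k).length = m := MFDaux.length_multiIndexList k
  have hcount : ∀ j, ((multiIndexList k).count j : ℝ) ≤ (m : ℝ) := by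
    intro j
    have : List.count j (multiIndexList k) ≤ (multiIndexList k).length := List.count_le_length
    rw [hlen] at this
    exact_mod_cast this
  have hyb : ∀ j, x j ≤ y j ∧ y j ≤ x j + (m : ℝ) * z := fun j =>
    ⟨(hy j).1, le_trans (hy j).2 (by nlinarith [hcount j, le_of_lt hzpos])⟩
  have hx1 : ∀ j, x j ≤ 1 := by
    intro j
    calc x j ≤ ∑ i, x i := Finset.single_le_sum (fun i _ => hx.1 i) (Finset.mem_univ j)
    _ ≤ 1 := hx.2
  have hz1 : z ≤ 1 := by
    rw [hz, div_le_one hn0]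
    exact_mod_cast hn1
  have hxK : x ∈ K := fun j _ =>
    ⟨hx.1 j, le_trans (hx1 j) (le_add_of_nonneg_right (Nat.cast_nonneg m))⟩
  have hyK : y ∈ K := by
    intro j _
    refine ⟨le_trans (hx.1 j) (hyb j).1, ?_⟩
    have h1 := (hyb j).2
    have h2 := hx1 j
    have h3 : (0 : ℝ) ≤ (m : ℝ) := Nat.cast_nonneg m
    nlinarith
  have hmz : (m : ℝ) * z < δ := by
    rw [hz, mul_one_div, div_lt_iff₀ hn0]
    have h1 : (m : ℝ) / δ < n := lt_of_lt_of_le hN₂ (by exact_mod_cast hnN₂)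
    rw [div_lt_iff₀ hδ] at h1
    linarith
  have hdistxy : dist x y < δ := by
    refine lt_of_le_of_lt ((dist_pi_le_iff (by positivity)).mpr fun j => ?_) hmz
    rw [Real.dist_eq, abs_sub_comm, abs_of_nonneg (by linarith [(hyb j).1])]
    linarith [(hyb j).2]
  have hgxy : dist (g x) (g y) < ε / 2 := hδ' x hxK y hyK hdistxy
  have hF : multiFwdDiffN n k f x = z ^ m * g y := by
    rw [MFDaux.multiFwdDiffN_eq_listDiff, ← hz, ← hlen]
    exact heq
  set c : ℝ := (n.factorial : ℝ) / ((n - m).factorial : ℝ) * z ^ m with hcdef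
  have hcnear : |c - 1| < ε / (2 * (M + 1)) := by
    have h := hN₁ n hnN₁
    rw [Real.dist_eq] at h
    rw [hcdef, hz]
    exact h
  rw [Real.dist_eq]
  have hgoal : g x - (n.factorial : ℝ) / ((n - m).factorial : ℝ) * multiFwdDiffN n k f x
      = (g x - g y) + (1 - c) * g y := by
    rw [hF, hcdef]
    ring
  rw [hgoal]
  have h1 : |g x - g y| < ε / 2 := by
    rw [← Real.dist_eq]
    exact hgxy
  have h2 : |(1 - c) * g y| ≤ ε / (2 * (M + 1)) * M := by
    rw [abs_mul]
    refine mul_le_mul (le_of_lt ?_) (hM y hyK) (abs_nonneg _) (by positivity)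
    rw [abs_sub_comm]
    exact hcnear
  have h3 : ε / (2 * (M + 1)) * M ≤ ε / 2 := by
    rw [div_mul_eq_mul_div, div_le_div_iff₀ (by positivity) (by norm_num)]
    nlinarith
  calc |(g x - g y) + (1 - c) * g y| ≤ |g x - g y| + |(1 - c) * g y| := abs_add_le _ _
  _ < ε / 2 + ε / (2 * (M + 1)) * M := add_lt_add_of_lt_of_le h1 h2
  _ ≤ ε := by linarith
end

section
/- Let d ≥ 1, n ≥ 1, x ∈ [0,1]^d, let k = (k_1,…,k_d) be a multi-index with k_i ≤ n for all i, and let f : ℝ^d → ℝ. If ξ_{n−k}(x) = (ξ^1,…,ξ^d) is a random vector whose components are independent with ξ^i distributed binomially Bin(n−k_i, x_i), then ∂^{|k|}B̃_n(f;x)/∂x_1^{k_1}⋯∂x_d^{k_d} = (∏_{i=1}^{d} n(n−1)⋯(n−k_i+1) / n^{|k|}) · E[n^{|k|} Δ^k f(ξ_{n−k}(x)/n)], where Δ^k is the composition of the k_i-fold iterated forward differences with step 1/n in each coordinate. -/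
open MeasureTheory ProbabilityTheory

/-- The `n`-th "cube" Bernstein polynomial of `f : ℝ^d → ℝ`. -/
noncomputable def cubeBernstein (d n : ℕ) (f : (Fin d → ℝ) → ℝ) (x : Fin d → ℝ) : ℝ :=
  ∑ j ∈ Fintype.piFinset (fun _ : Fin d => Finset.range (n + 1)),
    f (fun i => (j i : ℝ) / n) *
      ∏ i, (n.choose (j i) : ℝ) * x i ^ (j i) * (1 - x i) ^ (n - j i)

/-- Partial derivative of `g : ℝ^d → ℝ` in the `i`-th coordinate. -/
noncomputable def partialDeriv' {d : ℕ} (i : Fin d) (g : (Fin d → ℝ) → ℝ) :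
    (Fin d → ℝ) → ℝ :=
  fun x => deriv (fun t => g (Function.update x i t)) (x i)

/-- Mixed partial derivative `∂^{|k|}/∂x_1^{k_1}⋯∂x_d^{k_d}` of `g : ℝ^d → ℝ`
(the derivative in `x_1` is applied outermost). -/
noncomputable def mixedPartial {d : ℕ} (k : Fin d → ℕ) (g : (Fin d → ℝ) → ℝ) :
    (Fin d → ℝ) → ℝ :=
  (List.finRange d).foldr (fun i h => (partialDeriv' i)^[k i] h) g

section Aux
open Finset Function

noncomputable def bb (m j : ℕ) (t : ℝ) : ℝ := (m.choose j : ℝ) * t ^ j * (1 - t) ^ (m - j)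

noncomputable def SB (d : ℕ) (m : Fin d → ℕ) (g : (Fin d → ℕ) → ℝ) (x : Fin d → ℝ) : ℝ :=
  ∑ j ∈ Fintype.piFinset (fun i => Finset.range (m i + 1)), g j * ∏ i, bb (m i) (j i) (x i)

def dstep {d : ℕ} (i : Fin d) (g : (Fin d → ℕ) → ℝ) : (Fin d → ℕ) → ℝ :=
  fun j => g (Function.update j i (j i + 1)) - g j

lemma hasDerivAt_bb (m a : ℕ) (t : ℝ) :
    HasDerivAt (bb m a)
      ((m.choose a : ℝ) * (a : ℝ) * t ^ (a - 1) * (1 - t) ^ (m - a)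
        - (m.choose a : ℝ) * ((m - a : ℕ) : ℝ) * t ^ a * (1 - t) ^ (m - a - 1)) t := by
  have h2 : HasDerivAt (fun s : ℝ => (1 - s) ^ (m - a))
      ((((m - a : ℕ) : ℝ) * (1 - t) ^ (m - a - 1)) * (-1)) t := by
    exact (hasDerivAt_pow (m - a) (1 - t)).comp t ((hasDerivAt_id t).const_sub 1)
  have h := ((hasDerivAt_pow a t).fun_mul h2).const_mul ((m.choose a : ℝ))
  have hfun : (fun s => (m.choose a : ℝ) * (s ^ a * (1 - s) ^ (m - a))) = bb m a := by
    funext s; simp only [bb]; ring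
  rw [hfun] at h
  exact h.congr_deriv (by ring)

lemma hasDerivAt_bsum (m : ℕ) (hm : 1 ≤ m) (c : ℕ → ℝ) (t : ℝ) :
    HasDerivAt (fun s => ∑ a ∈ Finset.range (m + 1), c a * bb m a s)
      ((m : ℝ) * ∑ a ∈ Finset.range m, (c (a + 1) - c a) * bb (m - 1) a t) t := by
  obtain ⟨m', rfl⟩ : ∃ m', m = m' + 1 := ⟨m - 1, by omega⟩
  set m := m' + 1
  have H : HasDerivAt (fun s => ∑ a ∈ Finset.range (m + 1), c a * bb m a s)
      (∑ a ∈ Finset.range (m + 1), c a *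
        ((m.choose a : ℝ) * (a : ℝ) * t ^ (a - 1) * (1 - t) ^ (m - a)
          - (m.choose a : ℝ) * ((m - a : ℕ) : ℝ) * t ^ a * (1 - t) ^ (m - a - 1))) t :=
    HasDerivAt.fun_sum (fun a _ => (hasDerivAt_bb m a t).const_mul (c a))
  convert H using 1
  have split : ∑ a ∈ Finset.range (m + 1), c a *
        ((m.choose a : ℝ) * (a : ℝ) * t ^ (a - 1) * (1 - t) ^ (m - a)
          - (m.choose a : ℝ) * ((m - a : ℕ) : ℝ) * t ^ a * (1 - t) ^ (m - a - 1))
      = (∑ a ∈ Finset.range (m + 1),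
            c a * ((m.choose a : ℝ) * (a : ℝ) * t ^ (a - 1) * (1 - t) ^ (m - a)))
        - ∑ a ∈ Finset.range (m + 1),
            c a * ((m.choose a : ℝ) * ((m - a : ℕ) : ℝ) * t ^ a * (1 - t) ^ (m - a - 1)) := by
    rw [← Finset.sum_sub_distrib]
    exact Finset.sum_congr rfl fun a _ => by ring
  rw [split]
  have keyN : ∀ a : ℕ, m.choose (a + 1) * (a + 1) = m * m'.choose a :=
    fun a => (Nat.add_one_mul_choose_eq m' a).symm
  have key2 : ∀ a : ℕ, m.choose a * (m - a) = m * m'.choose a :=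
    fun a => (Nat.choose_succ_right_eq m a).symm.trans (keyN a)
  have hm1 : m - 1 = m' := rfl
  have e1 : ∑ a ∈ Finset.range (m + 1),
        c a * ((m.choose a : ℝ) * (a : ℝ) * t ^ (a - 1) * (1 - t) ^ (m - a))
      = ∑ a ∈ Finset.range m, (m : ℝ) * (c (a + 1) * bb (m - 1) a t) := by
    rw [Finset.sum_range_succ']
    simp only [Nat.cast_zero, mul_zero, zero_mul, add_zero]
    refine Finset.sum_congr rfl fun a ha => ?_
    have hc : (m.choose (a + 1) : ℝ) * ((a + 1 : ℕ) : ℝ) = (m : ℝ) * (m'.choose a : ℝ) := by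
      exact_mod_cast congrArg (Nat.cast : ℕ → ℝ) (keyN a)
    have hex : m - (a + 1) = m' - a := by omega
    simp only [bb, hm1, Nat.add_sub_cancel, hex]
    push_cast at hc ⊢
    linear_combination (c (a + 1) * t ^ a * (1 - t) ^ (m' - a)) * hc
  have e2 : ∑ a ∈ Finset.range (m + 1),
        c a * ((m.choose a : ℝ) * ((m - a : ℕ) : ℝ) * t ^ a * (1 - t) ^ (m - a - 1))
      = ∑ a ∈ Finset.range m, (m : ℝ) * (c a * bb (m - 1) a t) := by
    rw [Finset.sum_range_succ]
    simp only [Nat.sub_self, Nat.cast_zero, mul_zero, zero_mul, add_zero]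
    refine Finset.sum_congr rfl fun a ha => ?_
    have hc : (m.choose a : ℝ) * ((m - a : ℕ) : ℝ) = (m : ℝ) * (m'.choose a : ℝ) := by
      exact_mod_cast congrArg (Nat.cast : ℕ → ℝ) (key2 a)
    have hex : m - a - 1 = m' - a := by omega
    simp only [bb, hm1, hex]
    linear_combination (c a * t ^ a * (1 - t) ^ (m' - a)) * hc
  rw [e1, e2, Finset.mul_sum, ← Finset.sum_sub_distrib]
  exact Finset.sum_congr rfl fun a _ => by ring


lemma sum_piFinset_split {d : ℕ} (r : Fin d → Finset ℕ) (i0 : Fin d) (F : (Fin d → ℕ) → ℝ) :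
    ∑ j ∈ Fintype.piFinset r, F j =
      ∑ j ∈ Fintype.piFinset (Function.update r i0 {0}), ∑ a ∈ r i0,
        F (Function.update j i0 a) := by
  rw [← Finset.sum_product']
  refine Finset.sum_nbij' (fun j => (Function.update j i0 0, j i0))
    (fun p => Function.update p.1 i0 p.2) ?_ ?_ ?_ ?_ ?_
  · intro j hj
    rw [Fintype.mem_piFinset] at hj
    rw [Finset.mem_product]
    constructor
    · rw [Fintype.mem_piFinset]
      intro i
      rcases eq_or_ne i i0 with rfl | hi
      · simp
      · simp [Function.update_of_ne hi, hj i]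
    · exact hj i0
  · intro p hp
    rw [Finset.mem_product] at hp
    obtain ⟨h1, h2⟩ := hp
    rw [Fintype.mem_piFinset] at h1 ⊢
    intro i
    rcases eq_or_ne i i0 with rfl | hi
    · simpa using h2
    · have := h1 i
      simpa [Function.update_of_ne hi] using this
  · intro j hj
    funext i
    rcases eq_or_ne i i0 with rfl | hi
    · simp
    · simp [Function.update_of_ne hi]
  · intro p hp
    rw [Finset.mem_product] at hp
    have h0 : p.1 i0 = 0 := by
      have := (Fintype.mem_piFinset.mp hp.1) i0
      simpa using this
    ext i
    · rcases eq_or_ne i i0 with rfl | hi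
      · simp [h0]
      · simp [Function.update_of_ne hi]
    · simp
  · intro j hj
    congr 1
    funext i
    rcases eq_or_ne i i0 with rfl | hi
    · simp
    · simp [Function.update_of_ne hi]


lemma SB_apply_update {d : ℕ} (m : Fin d → ℕ) (g : (Fin d → ℕ) → ℝ) (x : Fin d → ℝ)
    (i0 : Fin d) (t : ℝ) :
    SB d m g (Function.update x i0 t) =
      ∑ j ∈ Fintype.piFinset (Function.update (fun i => Finset.range (m i + 1)) i0 {0}),
        ∑ a ∈ Finset.range (m i0 + 1),
          (g (Function.update j i0 a) * ∏ i ∈ Finset.univ.erase i0, bb (m i) (j i) (x i))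
            * bb (m i0) a t := by
  rw [SB, sum_piFinset_split _ i0]
  refine Finset.sum_congr rfl fun j hj => Finset.sum_congr rfl fun a ha => ?_
  have hprod : (∏ i, bb (m i) (Function.update j i0 a i) (Function.update x i0 t i))
      = bb (m i0) a t * ∏ i ∈ Finset.univ.erase i0, bb (m i) (j i) (x i) := by
    rw [← Finset.mul_prod_erase Finset.univ _ (Finset.mem_univ i0)]
    congr 1
    · simp
    · exact Finset.prod_congr rfl fun i hi => by
        rw [Function.update_of_ne (Finset.ne_of_mem_erase hi),
          Function.update_of_ne (Finset.ne_of_mem_erase hi)]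
  rw [hprod]; ring


lemma partialDeriv'_SB {d : ℕ} (m : Fin d → ℕ) (g : (Fin d → ℕ) → ℝ) (i0 : Fin d)
    (h1 : 1 ≤ m i0) :
    partialDeriv' i0 (SB d m g) =
      fun x => (m i0 : ℝ) * SB d (Function.update m i0 (m i0 - 1)) (dstep i0 g) x := by
  funext x
  set Rest := Fintype.piFinset (Function.update (fun i => Finset.range (m i + 1)) i0 {0}) with hRest
  set W : (Fin d → ℕ) → ℝ := fun j => ∏ i ∈ Finset.univ.erase i0, bb (m i) (j i) (x i) with hW
  set c : (Fin d → ℕ) → ℕ → ℝ := fun j a => g (Function.update j i0 a) * W j with hc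
  have hsec : (fun t => SB d m g (Function.update x i0 t)) =
      fun t => ∑ j ∈ Rest, ∑ a ∈ Finset.range (m i0 + 1), c j a * bb (m i0) a t := by
    funext t; exact SB_apply_update m g x i0 t
  have hder : HasDerivAt (fun t => SB d m g (Function.update x i0 t))
      (∑ j ∈ Rest, (m i0 : ℝ) * ∑ a ∈ Finset.range (m i0),
        (c j (a + 1) - c j a) * bb (m i0 - 1) a (x i0)) (x i0) := by
    rw [hsec]
    exact HasDerivAt.fun_sum fun j hj => hasDerivAt_bsum (m i0) h1 (c j) (x i0)
  rw [partialDeriv', hder.deriv]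
  -- now compute the RHS
  have hxupd : Function.update x i0 (x i0) = x := Function.update_eq_self i0 x
  have hRest' : Fintype.piFinset (Function.update
      (fun i => Finset.range (Function.update m i0 (m i0 - 1) i + 1)) i0 {0}) = Rest := by
    rw [hRest]
    congr 1
    funext i
    rcases eq_or_ne i i0 with rfl | hi
    · simp
    · simp [Function.update_of_ne hi]
  have hrhs : SB d (Function.update m i0 (m i0 - 1)) (dstep i0 g) x =
      ∑ j ∈ Rest, ∑ a ∈ Finset.range (m i0),
        ((g (Function.update j i0 (a + 1)) - g (Function.update j i0 a)) * W j)
          * bb (m i0 - 1) a (x i0) := by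
    conv_lhs => rw [← hxupd]
    rw [SB_apply_update, hRest']
    refine Finset.sum_congr rfl fun j hj => ?_
    rw [Function.update_self]
    have hmm : m i0 - 1 + 1 = m i0 := by omega
    rw [hmm]
    refine Finset.sum_congr rfl fun a ha => ?_
    congr 2
    · rw [dstep]
      congr 2
      · rw [Function.update_idem, Function.update_self]
      -- goal? maybe none
    · rw [hW]
      exact Finset.prod_congr rfl fun i hi => by
        rw [Function.update_of_ne (Finset.ne_of_mem_erase hi)]
  rw [hrhs, Finset.mul_sum]
  refine Finset.sum_congr rfl fun j hj => ?_
  rw [Finset.mul_sum, Finset.mul_sum]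
  refine Finset.sum_congr rfl fun a ha => ?_
  rw [hc]
  ring


lemma partialDeriv'_const_mul {d : ℕ} (i : Fin d) (c : ℝ) (h : (Fin d → ℝ) → ℝ) :
    partialDeriv' i (fun x => c * h x) = fun x => c * partialDeriv' i h x := by
  funext x
  exact deriv_const_mul_field c

lemma iter_partialDeriv'_const_mul {d : ℕ} (i : Fin d) (r : ℕ) (c : ℝ)
    (h : (Fin d → ℝ) → ℝ) :
    (partialDeriv' i)^[r] (fun x => c * h x) = fun x => c * (partialDeriv' i)^[r] h x := by
  induction r generalizing h with
  | zero => rfl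
  | succ r ih =>
    rw [Function.iterate_succ_apply, partialDeriv'_const_mul, ih,
      ← Function.iterate_succ_apply]

lemma iter_partialDeriv'_SB {d : ℕ} (m : Fin d → ℕ) (g : (Fin d → ℕ) → ℝ) (i0 : Fin d)
    (r : ℕ) (hr : r ≤ m i0) :
    (partialDeriv' i0)^[r] (SB d m g) =
      fun x => ((m i0).descFactorial r : ℝ) *
        SB d (Function.update m i0 (m i0 - r)) ((dstep i0)^[r] g) x := by
  induction r with
  | zero =>
    simp only [Function.iterate_zero_apply, Nat.descFactorial_zero, Nat.cast_one, one_mul,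
      Nat.sub_zero, Function.update_eq_self]
  | succ r ih =>
    have hr' : r ≤ m i0 := by omega
    rw [Function.iterate_succ_apply', ih hr', partialDeriv'_const_mul,
      partialDeriv'_SB _ _ i0 (by simp [Function.update_self]; omega)]
    funext x
    rw [Function.update_self, Function.update_idem]
    have h1 : m i0 - r - 1 = m i0 - (r + 1) := by omega
    have h2 : ((m i0).descFactorial (r + 1) : ℝ)
        = ((m i0).descFactorial r : ℝ) * ((m i0 - r : ℕ) : ℝ) := by
      rw [Nat.descFactorial_succ]; push_cast; ring
    rw [h1, h2, Function.iterate_succ_apply']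
    ring

lemma foldr_partialDeriv'_SB {d : ℕ} (m k : Fin d → ℕ) (g : (Fin d → ℕ) → ℝ)
    (l : List (Fin d)) (hl : l.Nodup) (hk : ∀ i ∈ l, k i ≤ m i) :
    l.foldr (fun i h => (partialDeriv' i)^[k i] h) (SB d m g) =
      fun x => (∏ i ∈ l.toFinset, ((m i).descFactorial (k i) : ℝ)) *
        SB d (fun i => if i ∈ l then m i - k i else m i)
          (l.foldr (fun i h => (dstep i)^[k i] h) g) x := by
  induction l with
  | nil =>
    funext x
    simp [SB]
  | cons i0 l' ih =>
    have hnd : l'.Nodup := (List.nodup_cons.mp hl).2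
    have hni : i0 ∉ l' := (List.nodup_cons.mp hl).1
    have hk' : ∀ i ∈ l', k i ≤ m i := fun i hi => hk i (List.mem_cons_of_mem _ hi)
    set M' : Fin d → ℕ := fun i => if i ∈ l' then m i - k i else m i with hM'
    have hmi0 : M' i0 = m i0 := by simp [hM', hni]
    have hb : k i0 ≤ M' i0 := by rw [hmi0]; exact hk i0 (List.mem_cons_self)
    rw [List.foldr_cons, ih hnd hk', iter_partialDeriv'_const_mul,
      iter_partialDeriv'_SB M' (List.foldr (fun i h => (dstep i)^[k i] h) g l') i0 (k i0) hb]
    funext x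
    have hupd : Function.update M' i0 (M' i0 - k i0)
        = fun i => if i ∈ i0 :: l' then m i - k i else m i := by
      funext i
      rcases eq_or_ne i i0 with rfl | hi
      · simp [hM', hni]
      · simp [Function.update_of_ne hi, hM', List.mem_cons, hi]
    rw [hupd, hmi0]
    have hprod : (∏ i ∈ (i0 :: l').toFinset, ((m i).descFactorial (k i) : ℝ))
        = ((m i0).descFactorial (k i0) : ℝ) *
          ∏ i ∈ l'.toFinset, ((m i).descFactorial (k i) : ℝ) := by
      rw [List.toFinset_cons, Finset.prod_insert (by simpa using hni)]
    rw [hprod, List.foldr_cons]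
    ring


lemma cubeBernstein_eq_SB (d n : ℕ) (f : (Fin d → ℝ) → ℝ) :
    cubeBernstein d n f = SB d (fun _ => n) (fun j => f (fun i => (j i : ℝ) / n)) := by
  funext x
  simp [cubeBernstein, SB, bb]

/-- sampling map: `φ n g j = g (j/n)` -/
noncomputable def sampl {d : ℕ} (n : ℕ) (g : (Fin d → ℝ) → ℝ) : (Fin d → ℕ) → ℝ :=
  fun j => g (fun i => (j i : ℝ) / n)

lemma sampl_coordFwdDiff {d : ℕ} (n : ℕ) (i : Fin d) (g : (Fin d → ℝ) → ℝ) :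
    sampl n (coordFwdDiff i (1 / (n : ℝ)) g) = dstep i (sampl n g) := by
  funext j
  have hupd : (Function.update (fun i' => (j i' : ℝ) / n) i ((j i : ℝ) / n + 1 / n))
      = fun i' => ((Function.update j i (j i + 1) : Fin d → ℕ) i' : ℝ) / n := by
    funext i'
    rcases eq_or_ne i' i with rfl | hi
    · simp [add_div, one_div]
    · simp [Function.update_of_ne hi]
  simp only [sampl, coordFwdDiff, dstep, hupd]

lemma sampl_iter_coordFwdDiff {d : ℕ} (n : ℕ) (i : Fin d) (r : ℕ) (g : (Fin d → ℝ) → ℝ) :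
    sampl n ((coordFwdDiff i (1 / (n : ℝ)))^[r] g) = (dstep i)^[r] (sampl n g) := by
  induction r generalizing g with
  | zero => rfl
  | succ r ih =>
    rw [Function.iterate_succ_apply, ih, sampl_coordFwdDiff, ← Function.iterate_succ_apply]

lemma sampl_foldr {d : ℕ} (n : ℕ) (k : Fin d → ℕ) (g : (Fin d → ℝ) → ℝ)
    (l : List (Fin d)) :
    sampl n (l.foldr (fun i h => (coordFwdDiff i (1 / (n : ℝ)))^[k i] h) g) =
      l.foldr (fun i h => (dstep i)^[k i] h) (sampl n g) := by
  induction l with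
  | nil => rfl
  | cons i0 l' ih =>
    rw [List.foldr_cons, List.foldr_cons, ← ih, sampl_iter_coordFwdDiff]


lemma integral_eq_sum_of_vanishing {Ω : Type*} [MeasurableSpace Ω] (μ : Measure Ω) [IsProbabilityMeasure μ]
    (d : ℕ) (N : Fin d → ℕ) (F : (Fin d → ℕ) → ℝ)
    (ξ : Fin d → Ω → ℕ) (hmeas : ∀ i, Measurable (ξ i))
    (hindep : iIndepFun ξ μ)
    (hnull : ∀ i m, N i < m → μ {ω | ξ i ω = m} = 0) :
    ∫ ω, F (fun i => ξ i ω) ∂μ =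
      ∑ j ∈ Fintype.piFinset (fun i => Finset.range (N i + 1)),
        F j * ∏ i, (μ {ω | ξ i ω = j i}).toReal := by
  set T := Fintype.piFinset (fun i => Finset.range (N i + 1)) with hT
  -- the bad set is null
  have hbig : ∀ i, μ {ω | N i < ξ i ω} = 0 := by
    intro i
    have hsub : {ω | N i < ξ i ω} ⊆ ⋃ m : ℕ, {ω | ξ i ω = m + (N i + 1)} := by
      intro ω hω
      simp only [Set.mem_setOf_eq] at hω
      exact Set.mem_iUnion.mpr ⟨ξ i ω - (N i + 1), by
        simp only [Set.mem_setOf_eq]; omega⟩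
    refine measure_mono_null hsub (measure_iUnion_null fun m => ?_)
    exact hnull i _ (by omega)
  have hA : μ {ω | ¬ ∀ i, ξ i ω ≤ N i} = 0 := by
    have hsub : {ω | ¬ ∀ i, ξ i ω ≤ N i} ⊆ ⋃ i, {ω | N i < ξ i ω} := by
      intro ω hω
      simp only [Set.mem_setOf_eq, not_forall, not_le] at hω
      obtain ⟨i, hi⟩ := hω
      exact Set.mem_iUnion.mpr ⟨i, hi⟩
    exact measure_mono_null hsub (measure_iUnion_null fun i => hbig i)
  have hmeasY : ∀ j : Fin d → ℕ, MeasurableSet {ω | (fun i => ξ i ω) = j} := by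
    intro j
    have : {ω | (fun i => ξ i ω) = j} = ⋂ i, (ξ i) ⁻¹' {j i} := by
      ext ω; simp [funext_iff, Set.mem_iInter, eq_comm]
    rw [this]
    exact MeasurableSet.iInter fun i => (hmeas i) (measurableSet_singleton _)
  have hae : (fun ω => F (fun i => ξ i ω)) =ᵐ[μ]
      fun ω => ∑ j ∈ T, Set.indicator {ω' | (fun i => ξ i ω') = j} (fun _ => F j) ω := by
    refine Filter.eventuallyEq_of_mem (MeasureTheory.compl_mem_ae_iff.mpr hA) ?_
    intro ω hω
    simp only [Set.mem_compl_iff, Set.mem_setOf_eq, not_not] at hω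
    have hmem : (fun i => ξ i ω) ∈ T := by
      rw [hT, Fintype.mem_piFinset]
      intro i
      exact Finset.mem_range.mpr (Nat.lt_succ_of_le (hω i))
    beta_reduce
    have hsum := Finset.sum_eq_single_of_mem (s := T)
      (f := fun j => Set.indicator {ω' | (fun i => ξ i ω') = j} (fun _ => F j) ω)
      (fun i => ξ i ω) hmem
      (fun j _ hne => Set.indicator_of_notMem (fun h => hne (Eq.symm h)) _)
    exact (hsum.trans (Set.indicator_of_mem
      (show ω ∈ {ω' | (fun i => ξ i ω') = fun i => ξ i ω} from rfl) _)).symm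
  rw [integral_congr_ae hae, integral_finset_sum]
  · refine Finset.sum_congr rfl fun j hj => ?_
    rw [integral_indicator_const _ (hmeasY j), smul_eq_mul, mul_comm]
    congr 1
    -- μ {Y = j} = ∏ μ {ξ i = j i}
    have hset : {ω | (fun i => ξ i ω) = j} = ⋂ i ∈ Finset.univ, (ξ i) ⁻¹' {j i} := by
      ext ω; simp [funext_iff, eq_comm]
    have := hindep.measure_inter_preimage_eq_mul Finset.univ
      (sets := fun i => ({j i} : Set ℕ)) (fun i _ => measurableSet_singleton _)
    rw [measureReal_def, hset, this, ENNReal.toReal_prod]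
    rfl
  · intro j hj
    exact (integrable_const (F j)).indicator (hmeasY j)

end Aux

/-- If `ξ = (ξ¹,…,ξᵈ)` is a random vector on a probability space whose components are
independent, with `ξⁱ` binomially distributed `Bin(n - k_i, x_i)`, then
`∂^{|k|}B̃_n(f;x)/∂x^k = (∏_i n(n-1)⋯(n-k_i+1) / n^{|k|}) · E[n^{|k|} Δ^k f(ξ/n)]`. -/

theorem cubeBernstein_mixedPartial_eq_expectation {Ω : Type*} [MeasurableSpace Ω]
    (μ : Measure Ω) [IsProbabilityMeasure μ] (d n : ℕ) (hd : 1 ≤ d) (hn : 1 ≤ n)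
    (x : Fin d → ℝ) (hx : x ∈ Set.Icc (0 : Fin d → ℝ) 1) (k : Fin d → ℕ)
    (hk : ∀ i, k i ≤ n) (f : (Fin d → ℝ) → ℝ)
    (ξ : Fin d → Ω → ℕ) (hmeas : ∀ i, Measurable (ξ i))
    (hindep : iIndepFun ξ μ)
    (hdist : ∀ i, ∀ m : ℕ, μ {ω | ξ i ω = m} =
      ENNReal.ofReal
        (((n - k i).choose m : ℝ) * x i ^ m * (1 - x i) ^ (n - k i - m))) :
    mixedPartial k (cubeBernstein d n f) x =
      ((∏ i, (n.descFactorial (k i) : ℝ)) / (n : ℝ) ^ (∑ i, k i)) *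
        ∫ ω, (n : ℝ) ^ (∑ i, k i) *
          multiFwdDiffN n k f (fun i => (ξ i ω : ℝ) / n) ∂μ := by
  classical
  have hnn : (n : ℝ) ≠ 0 := Nat.cast_ne_zero.mpr (by omega)
  have hnz : (n : ℝ) ^ (∑ i, k i) ≠ 0 := pow_ne_zero _ hnn
  set G : (Fin d → ℕ) → ℝ := sampl n (multiFwdDiffN n k f) with hG
  -- Left-hand side
  have hL : mixedPartial k (cubeBernstein d n f) x
      = (∏ i, (n.descFactorial (k i) : ℝ)) * SB d (fun i => n - k i) G x := by
    rw [cubeBernstein_eq_SB, mixedPartial,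
      foldr_partialDeriv'_SB (fun _ => n) k _ (List.finRange d) (List.nodup_finRange d)
        (fun i _ => hk i)]
    have h1 : (fun i => if i ∈ List.finRange d then (fun _ : Fin d => n) i - k i
        else (fun _ : Fin d => n) i) = fun i => n - k i := by
      funext i; simp [List.mem_finRange]
    have h2 : (List.finRange d).foldr (fun i h => (dstep i)^[k i] h)
        (fun j => f (fun i => (j i : ℝ) / n)) = G := by
      rw [hG, multiFwdDiffN, sampl_foldr]
      rfl
    rw [h1, h2, List.toFinset_finRange]
  -- probabilities are the Bernstein weights
  have hw : ∀ (i : Fin d) (a : ℕ), (μ {ω | ξ i ω = a}).toReal = bb (n - k i) a (x i) := by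
    intro i a
    have hx0 : (0 : ℝ) ≤ x i := hx.1 i
    have hx1 : x i ≤ 1 := hx.2 i
    rw [hdist i a, ENNReal.toReal_ofReal (mul_nonneg (mul_nonneg (Nat.cast_nonneg _) (pow_nonneg hx0 _)) (pow_nonneg (by linarith) _))]
    rfl
  -- Right-hand side integral
  have hnull : ∀ (i : Fin d) (m : ℕ), n - k i < m → μ {ω | ξ i ω = m} = 0 := by
    intro i m hm
    rw [hdist i m, Nat.choose_eq_zero_of_lt hm]
    simp
  have hR : ∫ ω, G (fun i => ξ i ω) ∂μ
      = ∑ j ∈ Fintype.piFinset (fun i => Finset.range (n - k i + 1)),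
          G j * ∏ i, (μ {ω | ξ i ω = j i}).toReal :=
    integral_eq_sum_of_vanishing μ d (fun i => n - k i) G ξ hmeas hindep hnull
  have hSB : SB d (fun i => n - k i) G x
      = ∑ j ∈ Fintype.piFinset (fun i => Finset.range (n - k i + 1)),
          G j * ∏ i, (μ {ω | ξ i ω = j i}).toReal := by
    rw [SB]
    refine Finset.sum_congr rfl fun j hj => ?_
    congr 1
    exact Finset.prod_congr rfl fun i _ => (hw i (j i)).symm
  have hInt : (fun ω => (n : ℝ) ^ (∑ i, k i)
        * multiFwdDiffN n k f (fun i => (ξ i ω : ℝ) / n))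
      = fun ω => (n : ℝ) ^ (∑ i, k i) * G (fun i => ξ i ω) := rfl
  rw [hL, hInt, MeasureTheory.integral_const_mul, hR, ← hSB]
  field_simp
end
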